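/- Let T = (V, E) be a finite tree and let μ : V × V → ℝ be a symmetric function that is multiplicative along T, with |μ(u, v)| ≤ 1 whenever {u, v} ∈ E. Then T is a maximum weight spanning tree of the complete graph on V for the weights |μ|: for every tree T'' on vertex set V, the sum of |μ(u, v)| over the edges {u, v} of T'' is at most the sum of |μ(u, v)| over the edges of T. -/

import Mathlib

open SimpleGraph

/-- A symmetric function `μ` is multiplicative along a graph `G` if `μ u u = 1` and `μ u v`
is the product of `μ` over the edges of any (hence, in a tree, the unique) path from `u` to
`v`. -/
def MultAlong {V : Type*} (G : SimpleGraph V) (μ : V → V → ℝ) : Prop :=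
  (∀ u : V, μ u u = 1) ∧
  ∀ (u v : V) (p : G.Walk u v), p.IsPath →
    μ u v = (p.darts.map fun d => μ d.fst d.snd).prod

/-- The total weight of the edges of `G`, for a weight function `f` on unordered pairs. -/
noncomputable def edgeWeightSum {V : Type*} [Fintype V] (G : SimpleGraph V)
    (f : Sym2 V → ℝ) : ℝ :=
  ∑ e ∈ G.edgeSet.toFinite.toFinset, f e

/-- **A tree is a maximum weight spanning tree for its own correlations.** If `μ` is a symmetric
function that is multiplicative along a finite tree `G` and `|μ| ≤ 1` on the edges of `G`, then
for every tree `G'` on the same vertex set, the sum of `|μ|` over the edges of `G'` is at most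
the sum of `|μ|` over the edges of `G`. -/
private lemma abs_list_prod_le_one {l : List ℝ} (h : ∀ x ∈ l, |x| ≤ 1) : |l.prod| ≤ 1 := by
  induction l with
  | nil => simp
  | cons x t ih =>
    rw [List.prod_cons, abs_mul]
    have hx := h x (by simp)
    have ht := ih (fun y hy => h y (by simp [hy]))
    nlinarith [abs_nonneg x, abs_nonneg t.prod]

private lemma abs_list_prod_le {l : List ℝ} (h : ∀ x ∈ l, |x| ≤ 1) {a : ℝ} (ha : a ∈ l) :
    |l.prod| ≤ |a| := by
  induction l with
  | nil => cases ha
  | cons x t ih =>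
    rw [List.prod_cons, abs_mul]
    rcases List.mem_cons.mp ha with rfl | ha'
    · exact mul_le_of_le_one_right (abs_nonneg _)
        (abs_list_prod_le_one (fun y hy => h y (by simp [hy])))
    · calc |x| * |t.prod| ≤ 1 * |a| := by
            exact mul_le_mul (h x (by simp)) (ih (fun y hy => h y (by simp [hy])) ha')
              (abs_nonneg _) zero_le_one
        _ = |a| := one_mul _

private lemma exchange_step {V : Type*} [Fintype V] [DecidableEq (Sym2 V)]
    (G : SimpleGraph V) (hG : G.IsTree) (μ : V → V → ℝ)
    (hmult : MultAlong G μ) (hle : ∀ u v : V, G.Adj u v → |μ u v| ≤ 1)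
    (f : Sym2 V → ℝ) (hf : ∀ u v : V, f s(u, v) = |μ u v|)
    (G' : SimpleGraph V) (hG' : G'.IsTree)
    {e' : Sym2 V} (he' : e' ∈ G'.edgeSet) (he'G : e' ∉ G.edgeSet) :
    ∃ G'' : SimpleGraph V, G''.IsTree ∧
      G''.edgeSet.toFinite.toFinset \ G.edgeSet.toFinite.toFinset
        = (G'.edgeSet.toFinite.toFinset \ G.edgeSet.toFinite.toFinset).erase e' ∧
      ∑ e ∈ G'.edgeSet.toFinite.toFinset, f e ≤ ∑ e ∈ G''.edgeSet.toFinite.toFinset, f e := by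
  induction e' using Sym2.ind with
  | _ u v =>
  rw [mem_edgeSet] at he'
  set H : SimpleGraph V := G' \ fromEdgeSet {s(u, v)} with hH
  have hbr : G'.IsBridge s(u, v) :=
    (isAcyclic_iff_forall_adj_isBridge.mp hG'.2) he'
  have hnr : ¬ H.Reachable u v := isBridge_iff.mp hbr
  set S : Set V := {x | H.Reachable u x} with hS
  have huS : u ∈ S := Reachable.refl u
  have hvS : v ∉ S := hnr
  -- the G-path from u to v
  obtain ⟨p, hp, -⟩ := hG.existsUnique_path u v
  obtain ⟨d, hdmem, hda, hdb⟩ := p.exists_boundary_dart S huS hvS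
  have hab : G.Adj d.fst d.snd := d.adj
  have habne : d.fst ≠ d.snd := hab.ne
  have heG : s(d.fst, d.snd) ∈ G.edgeSet := hab
  have hHle' : H ≤ G' := sdiff_le
  -- weight comparison
  have hweight : f s(u, v) ≤ f s(d.fst, d.snd) := by
    rw [hf, hf]
    rw [hmult.2 u v p hp]
    apply abs_list_prod_le
    · intro x hx
      obtain ⟨d0, -, rfl⟩ := List.mem_map.mp hx
      exact hle _ _ d0.adj
    · exact List.mem_map_of_mem hdmem
  -- the new edge is not in G'
  have heG' : s(d.fst, d.snd) ∉ G'.edgeSet := by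
    intro hmem
    rw [mem_edgeSet] at hmem
    by_cases hcase : s(d.fst, d.snd) = s(u, v)
    · exact he'G (hcase ▸ heG)
    · have hHab : H.Adj d.fst d.snd := by
        rw [hH, sdiff_adj]
        refine ⟨hmem, ?_⟩
        rw [fromEdgeSet_adj]
        rintro ⟨hm, -⟩
        exact hcase (by simpa using hm)
      exact hdb (hda.trans hHab.reachable)
  have hne : s(d.fst, d.snd) ≠ s(u, v) := fun h => heG' (h ▸ he')
  set G'' : SimpleGraph V := H ⊔ fromEdgeSet {s(d.fst, d.snd)} with hG''
  have hHle : H ≤ G'' := le_sup_left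
  have hadj_ab : G''.Adj d.fst d.snd := by
    rw [hG'', sup_adj, fromEdgeSet_adj]
    exact Or.inr ⟨rfl, habne⟩
  -- every vertex is H-reachable from u or from v
  have key : ∀ (x w : V), G'.Walk x w → (H.Reachable u x ∨ H.Reachable v x) →
      (H.Reachable u w ∨ H.Reachable v w) := by
    intro x w q
    induction q with
    | nil => exact id
    | @cons x y w hxy q ih =>
      intro hx
      apply ih
      by_cases hcase : s(x, y) = s(u, v)
      · rw [Sym2.eq_iff] at hcase
        rcases hcase with ⟨rfl, rfl⟩ | ⟨rfl, rfl⟩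
        · exact Or.inr (Reachable.refl _)
        · exact Or.inl (Reachable.refl _)
      · have hHxy : H.Adj x y := by
          rw [hH, sdiff_adj]
          refine ⟨hxy, ?_⟩
          rw [fromEdgeSet_adj]
          rintro ⟨hm, -⟩
          exact hcase (by simpa using hm)
        rcases hx with h | h
        · exact Or.inl (h.trans hHxy.reachable)
        · exact Or.inr (h.trans hHxy.reachable)
  have reach_or : ∀ w : V, H.Reachable u w ∨ H.Reachable v w := by
    intro w
    obtain ⟨q⟩ := hG'.1.preconnected u w
    exact key u w q (Or.inl (Reachable.refl u))
  have huv2 : G''.Reachable u v := by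
    have r1 : G''.Reachable u d.fst := hda.mono hHle
    have r3 : H.Reachable v d.snd := (reach_or d.snd).resolve_left hdb
    exact (r1.trans hadj_ab.reachable).trans (r3.mono hHle).symm
  have hconn : G''.Connected := by
    rw [connected_iff]
    refine ⟨?_, hG'.1.nonempty⟩
    have key2 : ∀ z, G''.Reachable u z := by
      intro z
      rcases reach_or z with h | h
      · exact h.mono hHle
      · exact huv2.trans (h.mono hHle)
    exact fun x y => (key2 x).symm.trans (key2 y)
  have hacy : G''.IsAcyclic := by
    intro x c hc
    have hbridge : G''.IsBridge s(d.fst, d.snd) := by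
      rw [isBridge_iff]
      intro hr
      have hle2 : G'' \ fromEdgeSet {s(d.fst, d.snd)} ≤ H := by
        intro a b h
        rw [sdiff_adj, hG'', sup_adj] at h
        tauto
      exact hdb (hda.trans (hr.mono hle2))
    have hnotmem : s(d.fst, d.snd) ∉ c.edges :=
      (isBridge_iff_forall_cycle_notMem hadj_ab).mp hbridge c hc
    have hsub : ∀ e ∈ c.edges, e ∈ H.edgeSet := by
      intro e he
      have := c.edges_subset_edgeSet he
      rw [hG'', edgeSet_sup, edgeSet_fromEdgeSet] at this
      rcases this with h | h
      · exact h
      · have hx1 := h.1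
        rw [Set.mem_singleton_iff] at hx1
        subst hx1
        exact absurd he hnotmem
    exact hG'.2 _ ((hc.transfer hsub).mapLe hHle')
  refine ⟨G'', ⟨hconn, hacy⟩, ?_, ?_⟩
  · -- edge finset computation
    have hfin : G''.edgeSet.toFinite.toFinset
        = insert s(d.fst, d.snd) ((G'.edgeSet.toFinite.toFinset).erase s(u, v)) := by
      ext x
      simp only [Set.Finite.mem_toFinset, Finset.mem_insert, Finset.mem_erase, hG'', hH,
        edgeSet_sup, edgeSet_sdiff, edgeSet_fromEdgeSet, Set.mem_union, Set.mem_diff,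
        Set.mem_singleton_iff, Set.mem_setOf_eq]
      constructor
      · rintro (⟨hx, hx2⟩ | ⟨rfl, -⟩)
        · right
          refine ⟨?_, hx⟩
          intro hxeq
          subst hxeq
          exact hx2 ⟨rfl, by rw [Sym2.mem_diagSet, Sym2.mk_isDiag_iff]; exact he'.ne⟩
        · exact Or.inl rfl
      · rintro (rfl | ⟨hxne, hx⟩)
        · exact Or.inr ⟨rfl, by rw [Sym2.mem_diagSet, Sym2.mk_isDiag_iff]; exact habne⟩
        · exact Or.inl ⟨hx, fun hh => hxne hh.1⟩
    have heGfin : s(d.fst, d.snd) ∈ G.edgeSet.toFinite.toFinset := by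
      rw [Set.Finite.mem_toFinset]; exact heG
    rw [hfin, Finset.insert_sdiff_of_mem _ heGfin, ← Finset.erase_sdiff_comm]
  · have hfin : G''.edgeSet.toFinite.toFinset
        = insert s(d.fst, d.snd) ((G'.edgeSet.toFinite.toFinset).erase s(u, v)) := by
      ext x
      simp only [Set.Finite.mem_toFinset, Finset.mem_insert, Finset.mem_erase, hG'', hH,
        edgeSet_sup, edgeSet_sdiff, edgeSet_fromEdgeSet, Set.mem_union, Set.mem_diff,
        Set.mem_singleton_iff, Set.mem_setOf_eq]
      constructor
      · rintro (⟨hx, hx2⟩ | ⟨rfl, -⟩)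
        · right
          refine ⟨?_, hx⟩
          intro hxeq
          subst hxeq
          exact hx2 ⟨rfl, by rw [Sym2.mem_diagSet, Sym2.mk_isDiag_iff]; exact he'.ne⟩
        · exact Or.inl rfl
      · rintro (rfl | ⟨hxne, hx⟩)
        · exact Or.inr ⟨rfl, by rw [Sym2.mem_diagSet, Sym2.mk_isDiag_iff]; exact habne⟩
        · exact Or.inl ⟨hx, fun hh => hxne hh.1⟩
    have henotin : s(d.fst, d.snd) ∉ (G'.edgeSet.toFinite.toFinset).erase s(u, v) := by
      intro h
      exact heG' (by simpa [Set.Finite.mem_toFinset] using Finset.mem_of_mem_erase h)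
    have he'fin : s(u, v) ∈ G'.edgeSet.toFinite.toFinset := by
      rw [Set.Finite.mem_toFinset]; exact he'
    rw [hfin, Finset.sum_insert henotin, ← Finset.add_sum_erase _ f he'fin]
    linarith

theorem tree_is_max_weight_spanning_tree
    {V : Type*} [Fintype V]
    (G : SimpleGraph V) (hG : G.IsTree)
    (μ : V → V → ℝ) (hsymm : ∀ u v : V, μ u v = μ v u)
    (hmult : MultAlong G μ)
    (hle : ∀ u v : V, G.Adj u v → |μ u v| ≤ 1)
    (G' : SimpleGraph V) (hG' : G'.IsTree) :
    edgeWeightSum G' (Sym2.lift ⟨fun u v => |μ u v|, fun u v => by dsimp only; rw [hsymm]⟩) ≤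
      edgeWeightSum G (Sym2.lift ⟨fun u v => |μ u v|, fun u v => by dsimp only; rw [hsymm]⟩) := by
  classical
  set f := (Sym2.lift ⟨fun u v => |μ u v|, fun u v => by dsimp only; rw [hsymm]⟩ :
    Sym2 V → ℝ) with hfdef
  have hf : ∀ u v : V, f s(u, v) = |μ u v| := fun u v => by rw [hfdef]; simp
  suffices H : ∀ n (G₁ : SimpleGraph V), G₁.IsTree →
      (G₁.edgeSet.toFinite.toFinset \ G.edgeSet.toFinite.toFinset).card = n →
      edgeWeightSum G₁ f ≤ edgeWeightSum G f from H _ G' hG' rfl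
  intro n
  induction n using Nat.strong_induction_on with
  | _ n ih =>
    intro G₁ hT hcard
    rcases Nat.eq_zero_or_pos n with rfl | hpos
    · have hsub : G₁.edgeSet.toFinite.toFinset ⊆ G.edgeSet.toFinite.toFinset := by
        rw [← Finset.sdiff_eq_empty_iff_subset]
        exact Finset.card_eq_zero.mp hcard
      haveI : Fintype G.edgeSet := G.edgeSet.toFinite.fintype
      haveI : Fintype G₁.edgeSet := G₁.edgeSet.toFinite.fintype
      have h1 : G₁.edgeSet.toFinite.toFinset.card + 1 = Fintype.card V := by
        have h := hT.card_edgeFinset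
        rwa [show G₁.edgeFinset = G₁.edgeSet.toFinite.toFinset from by ext x; rw [mem_edgeFinset, Set.Finite.mem_toFinset]] at h
      have h2 : G.edgeSet.toFinite.toFinset.card + 1 = Fintype.card V := by
        have h := hG.card_edgeFinset
        rwa [show G.edgeFinset = G.edgeSet.toFinite.toFinset from by ext x; rw [mem_edgeFinset, Set.Finite.mem_toFinset]] at h
      have heq : G₁.edgeSet.toFinite.toFinset = G.edgeSet.toFinite.toFinset :=
        Finset.eq_of_subset_of_card_le hsub (by omega)
      unfold edgeWeightSum
      rw [heq]
    · obtain ⟨e', he'⟩ := Finset.card_pos.mp (by rw [hcard]; exact hpos)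
      rw [Finset.mem_sdiff, Set.Finite.mem_toFinset, Set.Finite.mem_toFinset] at he'
      obtain ⟨G₂, hT2, hdiff, hsum⟩ :=
        exchange_step G hG μ hmult hle f hf G₁ hT he'.1 he'.2
      have hc2 : (G₂.edgeSet.toFinite.toFinset \ G.edgeSet.toFinite.toFinset).card = n - 1 := by
        rw [hdiff, Finset.card_erase_of_mem, hcard]
        rw [Finset.mem_sdiff, Set.Finite.mem_toFinset, Set.Finite.mem_toFinset]
        exact he'
      exact le_trans hsum (ih (n - 1) (by omega) G₂ hT2 hc2)
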